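/- For every PL formula φ (i.e., a formula containing no unreliable connectives), the empty set entails φ in UCL (∅ ⊨_UCL φ) if and only if φ is a classical tautology, i.e., v ⊨ φ for every valuation v : X → {⊥,⊤}. -/
import Mathlib


namespace UCL

/-- The mode of a connective occurrence: the ideal (reliable) connective `c`,
its negated-output counterpart `c̄`, or its unreliable counterpart `c̃`. -/
inductive Mode where
  | ideal | negated | unreliable
deriving DecidableEq

/-- The binary connectives of the signature. -/
inductive BinConn where
  | and | or | imp | iff
deriving DecidableEq

/-- Formulas over the UCL signature `Σfc` and the set `X` of propositional
variables: constants, variables, negation family, binary connective families,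
and the `(3+2k)`-ary majority families (each in one of the three modes). -/
inductive Form (X : Type) where
  | verum : Form X
  | falsum : Form X
  | var : X → Form X
  | not : Mode → Form X → Form X
  | bin : BinConn → Mode → Form X → Form X → Form X
  | maj : (k : ℕ) → Mode → (Fin (3 + 2 * k) → Form X) → Form X

variable {X : Type}

/-- Output of a connective occurrence: negated-output counterparts negate. -/
def applyMode (m : Mode) (b : Bool) : Bool := if m = .negated then !b else b

def binSem : BinConn → Bool → Bool → Bool
  | .and, a, b => a && b
  | .or, a, b => a || b
  | .imp, a, b => !a || b
  | .iff, a, b => a == b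

/-- Classical satisfaction of a formula by a valuation (meaningful for PL
formulas; unreliable connectives are evaluated like their ideal versions). -/
def Form.eval (v : X → Bool) : Form X → Bool
  | .verum => true
  | .falsum => false
  | .var x => v x
  | .not m φ => applyMode m (!(φ.eval v))
  | .bin c m φ ψ => applyMode m (binSem c (φ.eval v) (ψ.eval v))
  | .maj k m f => applyMode m (decide (3 + 2 * k < 2 * ∑ i, ((f i).eval v).toNat))

/-- A PL formula: contains no unreliable connectives. -/
def Form.IsPL : Form X → Prop
  | .verum => True
  | .falsum => True
  | .var _ => True
  | .not m φ => m ≠ .unreliable ∧ φ.IsPL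
  | .bin _ m φ ψ => m ≠ .unreliable ∧ φ.IsPL ∧ ψ.IsPL
  | .maj _ m f => m ≠ .unreliable ∧ ∀ i, (f i).IsPL

/-- The outcome relation `φ ⊳ ψ` between PL formulas `φ` and c-formulas `ψ`. -/
inductive Outcome : Form X → Form X → Prop where
  | refl (φ : Form X) : φ.IsPL → Outcome φ φ
  | notC {m : Mode} {φ ψ : Form X} (hm : m ≠ .unreliable) :
      Outcome φ ψ → Outcome (.not m φ) (.not m ψ)
  | binC {c : BinConn} {m : Mode} {φ₁ φ₂ ψ₁ ψ₂ : Form X} (hm : m ≠ .unreliable) :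
      Outcome φ₁ ψ₁ → Outcome φ₂ ψ₂ → Outcome (.bin c m φ₁ φ₂) (.bin c m ψ₁ ψ₂)
  | majC {k : ℕ} {m : Mode} {f g : Fin (3 + 2 * k) → Form X} (hm : m ≠ .unreliable) :
      (∀ i, Outcome (f i) (g i)) → Outcome (.maj k m f) (.maj k m g)
  | notOk {φ ψ : Form X} : Outcome φ ψ → Outcome (.not .ideal φ) (.not .unreliable ψ)
  | notFail {φ ψ : Form X} : Outcome φ ψ → Outcome (.not .negated φ) (.not .unreliable ψ)
  | binOk {c : BinConn} {φ₁ φ₂ ψ₁ ψ₂ : Form X} :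
      Outcome φ₁ ψ₁ → Outcome φ₂ ψ₂ →
      Outcome (.bin c .ideal φ₁ φ₂) (.bin c .unreliable ψ₁ ψ₂)
  | binFail {c : BinConn} {φ₁ φ₂ ψ₁ ψ₂ : Form X} :
      Outcome φ₁ ψ₁ → Outcome φ₂ ψ₂ →
      Outcome (.bin c .negated φ₁ φ₂) (.bin c .unreliable ψ₁ ψ₂)
  | majOk {k : ℕ} {f g : Fin (3 + 2 * k) → Form X} :
      (∀ i, Outcome (f i) (g i)) → Outcome (.maj k .ideal f) (.maj k .unreliable g)
  | majFail {k : ℕ} {f g : Fin (3 + 2 * k) → Form X} :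
      (∀ i, Outcome (f i) (g i)) → Outcome (.maj k .negated f) (.maj k .unreliable g)

/-- The probability factor contributed by one connective occurrence:
the circuit connective has mode `m`, the outcome one mode `m'`. -/
noncomputable def modeFactor (m m' : Mode) : Polynomial ℝ :=
  match m, m' with
  | .unreliable, .ideal => Polynomial.X
  | .unreliable, .negated => 1 - Polynomial.X
  | .ideal, .ideal => 1
  | .negated, .negated => 1
  | _, _ => 0

/-- `Pν[ψ ▷ φ]`, written `prob ψ φ`: the probability polynomial of outcome `φ`
of the c-formula `ψ` (junk value `0` when `φ` is not an outcome of `ψ`). -/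
noncomputable def Form.prob [DecidableEq X] (ψ φ : Form X) : Polynomial ℝ :=
  match ψ, φ with
  | .verum, .verum => 1
  | .falsum, .falsum => 1
  | .var x, .var y => if x = y then 1 else 0
  | .not m ψ, .not m' φ => modeFactor m m' * ψ.prob φ
  | .bin c m ψ₁ ψ₂, .bin c' m' φ₁ φ₂ =>
      if c = c' then modeFactor m m' * (ψ₁.prob φ₁ * ψ₂.prob φ₂) else 0
  | .maj k m g, .maj k' m' f =>
      if h : k = k' then
        modeFactor m m' * ∏ i : Fin (3 + 2 * k), (g i).prob (f (Fin.cast (by omega) i))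
      else 0
  | _, _ => 0
termination_by structural ψ

/-- Number of occurrences of unreliable connectives in a formula. -/
def Form.unrelCount : Form X → ℕ
  | .verum => 0
  | .falsum => 0
  | .var _ => 0
  | .not m φ => (if m = .unreliable then 1 else 0) + φ.unrelCount
  | .bin _ m φ ψ => (if m = .unreliable then 1 else 0) + φ.unrelCount + ψ.unrelCount
  | .maj _ m f => (if m = .unreliable then 1 else 0) + ∑ i, (f i).unrelCount

/-- Number of occurrences of unreliable connectives of the c-formula `ψ` that
are replaced by their ideal counterparts in the outcome `φ` (junk value when
`φ` is not an outcome of `ψ`). -/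
def Form.idealRepl (ψ φ : Form X) : ℕ :=
  match ψ, φ with
  | .not m ψ, .not m' φ =>
      (if m = .unreliable ∧ m' = .ideal then 1 else 0) + ψ.idealRepl φ
  | .bin _ m ψ₁ ψ₂, .bin _ m' φ₁ φ₂ =>
      (if m = .unreliable ∧ m' = .ideal then 1 else 0) + ψ₁.idealRepl φ₁ + ψ₂.idealRepl φ₂
  | .maj k m g, .maj k' m' f =>
      (if m = .unreliable ∧ m' = .ideal then 1 else 0) +
        (if h : k = k' then ∑ i : Fin (3 + 2 * k), (g i).idealRepl (f (Fin.cast (by omega) i))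
         else 0)
  | _, _ => 0
termination_by structural ψ

/-- `P^v_ψ(ν)`: the aggregated probability, at reliability rate `ν`, of the
outcomes of `ψ` satisfied by the valuation `v`. -/
noncomputable def Pval [DecidableEq X] (v : X → Bool) (ψ : Form X) (ν : ℝ) : ℝ :=
  ∑ᶠ φ ∈ {φ : Form X | Outcome φ ψ ∧ φ.eval v = true}, (ψ.prob φ).eval ν

/-- `P^v_ψ` as a polynomial in `ℝ[ν]`. -/
noncomputable def Ppoly [DecidableEq X] (v : X → Bool) (ψ : Form X) : Polynomial ℝ :=
  ∑ᶠ φ ∈ {φ : Form X | Outcome φ ψ ∧ φ.eval v = true}, ψ.prob φ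

/-- An interpretation `I = (v, ρ)` of UCL. -/
structure Interp (X : Type) where
  v : X → Bool
  nu : ℝ
  mu : ℝ
  nu_gt : 1 / 2 < nu
  nu_le : nu ≤ 1
  mu_gt : 1 / 2 < mu
  mu_le : mu ≤ 1

/-- Satisfaction of a c-formula by an interpretation. -/
def satC [DecidableEq X] (I : Interp X) (ψ : Form X) : Prop :=
  I.mu ≤ Pval I.v ψ I.nu

/-- Satisfaction of the a-formula `μ ≤ P` (with `P` a polynomial in `ν` with
integer coefficients) by an interpretation. -/
def satA (I : Interp X) (P : Polynomial ℤ) : Prop :=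
  I.mu ≤ (P.map (Int.castRingHom ℝ)).eval I.nu

/-- `Γ ⊨_UCL ψ` for a finite set `Γ` of a-formulas and a c-formula `ψ`. -/
def entails [DecidableEq X] (Γ : List (Polynomial ℤ)) (ψ : Form X) : Prop :=
  ∀ I : Interp X, (∀ P ∈ Γ, satA I P) → satC I ψ

/-- UCL-satisfiability of a c-formula. -/
def UCLSat [DecidableEq X] (ψ : Form X) : Prop :=
  ∃ I : Interp X, satC I ψ

end UCL

namespace UCL

variable {X : Type}

lemma outcome_eq {φ ψ : Form X} (h : Outcome φ ψ) (hp : ψ.IsPL) : φ = ψ := by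
  induction h with
  | refl => rfl
  | notC hm o ih => rw [ih hp.2]
  | binC hm o1 o2 ih1 ih2 => rw [ih1 hp.2.1, ih2 hp.2.2]
  | majC hm o ih => congr 1; funext i; exact ih i (hp.2 i)
  | notOk o ih => exact absurd rfl hp.1
  | notFail o ih => exact absurd rfl hp.1
  | binOk o1 o2 ih1 ih2 => exact absurd rfl hp.1
  | binFail o1 o2 ih1 ih2 => exact absurd rfl hp.1
  | majOk o ih => exact absurd rfl hp.1
  | majFail o ih => exact absurd rfl hp.1

lemma prob_self [DecidableEq X] {φ : Form X} (hp : φ.IsPL) : φ.prob φ = 1 := by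
  induction φ with
  | verum => simp [Form.prob]
  | falsum => simp [Form.prob]
  | var x => simp [Form.prob]
  | not m ψ ih =>
    have hm : modeFactor m m = 1 := by
      cases m <;> first | rfl | exact absurd rfl hp.1
    simp [Form.prob, hm, ih hp.2]
  | bin c m ψ1 ψ2 ih1 ih2 =>
    have hm : modeFactor m m = 1 := by
      cases m <;> first | rfl | exact absurd rfl hp.1
    simp [Form.prob, hm, ih1 hp.2.1, ih2 hp.2.2]
  | maj k m f ih =>
    have hm : modeFactor m m = 1 := by
      cases m <;> first | rfl | exact absurd rfl hp.1
    simp only [Form.prob, hm, one_mul]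
    rw [dif_pos trivial, Finset.prod_eq_one]
    intro i _
    have : Fin.cast (by omega : 3 + 2 * k = 3 + 2 * k) i = i := rfl
    rw [this, ih i (hp.2 i)]

lemma pval_pl [DecidableEq X] {φ : Form X} (hp : φ.IsPL) (v : X → Bool) (ν : ℝ) :
    Pval v φ ν = if φ.eval v = true then 1 else 0 := by
  unfold Pval
  have hset : {ψ : Form X | Outcome ψ φ ∧ ψ.eval v = true} =
      if φ.eval v = true then {φ} else ∅ := by
    ext ψ
    split <;> rename_i he <;> simp only [Set.mem_setOf_eq, Set.mem_singleton_iff,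
      Set.mem_empty_iff_false, iff_false]
    · constructor
      · rintro ⟨ho, -⟩; exact outcome_eq ho hp
      · rintro rfl; exact ⟨Outcome.refl _ hp, he⟩
    · rintro ⟨ho, hev⟩
      exact he (outcome_eq ho hp ▸ hev)
  rw [hset]
  split
  · rw [finsum_mem_singleton, prob_self hp]; simp
  · rw [finsum_mem_empty]

end UCL

open UCL in
/-- For every PL formula `φ` (containing no unreliable connectives),
`∅ ⊨_UCL φ` iff `φ` is a classical tautology. -/
theorem stmt9 {X : Type} [DecidableEq X] (φ : Form X) (h : φ.IsPL) :
    entails [] φ ↔ ∀ v : X → Bool, φ.eval v = true := by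
  constructor
  · intro hent v
    by_contra hv
    have := hent ⟨v, 1, 1, by norm_num, le_refl 1, by norm_num, le_refl 1⟩ (by simp)
    rw [satC, pval_pl h, if_neg hv] at this
    linarith
  · intro ht I _
    rw [satC, pval_pl h, ht I.v, if_pos rfl]
    exact I.mu_le
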